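/- Let (S,d) be a metric space and let (f_k)_{k ≥ 1} ⊆ BL(S) be such that sup_{k ≥ 1} ‖f_k‖_BL < ∞ and the supports of the f_k (the closures of the sets where f_k is nonzero) are pairwise disjoint. Then the series f(x) = Σ_{k=1}^∞ f_k(x) converges pointwise, f ∈ BL(S), and ‖f‖_∞ ≤ sup_{k ≥ 1} ‖f_k‖_∞ and |f|_L ≤ 2·sup_{k ≥ 1} |f_k|_L. -/

import Mathlib

open Filter Topology

def IsBL {S : Type*} [PseudoMetricSpace S] (f : S → ℝ) : Prop :=
  (∃ C : ℝ, ∀ x, |f x| ≤ C) ∧ ∃ K : NNReal, LipschitzWith K f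

noncomputable def lipConst {S : Type*} [PseudoMetricSpace S] (f : S → ℝ) : ℝ :=
  sSup {r : ℝ | ∃ x y : S, x ≠ y ∧ r = |f x - f y| / dist x y}

noncomputable def supNorm {S : Type*} (f : S → ℝ) : ℝ :=
  sSup {r : ℝ | ∃ x : S, r = |f x|}

noncomputable def blNorm {S : Type*} [PseudoMetricSpace S] (f : S → ℝ) : ℝ :=
  supNorm f + lipConst f

lemma supNorm_nonneg' {S : Type*} (f : S → ℝ) : 0 ≤ supNorm f :=
  Real.sSup_nonneg (by rintro r ⟨x, rfl⟩; exact abs_nonneg _)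

lemma lipConst_nonneg' {S : Type*} [PseudoMetricSpace S] (f : S → ℝ) : 0 ≤ lipConst f :=
  Real.sSup_nonneg (by rintro r ⟨x, y, _, rfl⟩; exact div_nonneg (abs_nonneg _) dist_nonneg)

lemma abs_le_supNorm' {S : Type*} (f : S → ℝ) (C : ℝ) (h : ∀ x, |f x| ≤ C) (x : S) :
    |f x| ≤ supNorm f :=
  le_csSup ⟨C, by rintro r ⟨y, rfl⟩; exact h y⟩ ⟨x, rfl⟩

lemma abs_sub_le_lipConst' {S : Type*} [MetricSpace S] (f : S → ℝ) (K : NNReal)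
    (h : LipschitzWith K f) (x y : S) : |f x - f y| ≤ lipConst f * dist x y := by
  by_cases hxy : x = y
  · simp [hxy]
  · have hd : (0:ℝ) < dist x y := dist_pos.2 hxy
    have hb : BddAbove {r : ℝ | ∃ x y : S, x ≠ y ∧ r = |f x - f y| / dist x y} := by
      refine ⟨K, ?_⟩
      rintro r ⟨a, b, hab, rfl⟩
      rw [div_le_iff₀ (dist_pos.2 hab)]
      calc |f a - f b| = dist (f a) (f b) := (Real.dist_eq _ _).symm
        _ ≤ K * dist a b := h.dist_le_mul a b
    have : |f x - f y| / dist x y ≤ lipConst f := le_csSup hb ⟨x, y, hxy, rfl⟩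
    exact (div_le_iff₀ hd).1 this

theorem sum_of_disjointly_supported_BL {S : Type*} [MetricSpace S] (f : ℕ → S → ℝ)
    (hBL : ∀ k, IsBL (f k)) (hbd : ∃ C : ℝ, ∀ k, blNorm (f k) ≤ C)
    (hdisj : ∀ k m, k ≠ m → Disjoint (tsupport (f k)) (tsupport (f m))) :
    (∀ x, Summable (fun k => f k x)) ∧
    IsBL (fun x => ∑' k, f k x) ∧
    supNorm (fun x => ∑' k, f k x) ≤ sSup (Set.range fun k => supNorm (f k)) ∧
    lipConst (fun x => ∑' k, f k x) ≤ 2 * sSup (Set.range fun k => lipConst (f k)) := by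
  obtain ⟨C, hC⟩ := hbd
  -- at each point at most one function is nonzero
  have huniq : ∀ (x : S) (k m : ℕ), f k x ≠ 0 → f m x ≠ 0 → k = m := by
    intro x k m hk hm
    by_contra hne
    exact (hdisj k m hne).ne_of_mem (subset_tsupport _ hk) (subset_tsupport _ hm) rfl
  have hsub : ∀ x : S, ∃ k : ℕ, ∀ m, m ≠ k → f m x = 0 := by
    intro x
    by_cases h : ∃ k, f k x ≠ 0
    · obtain ⟨k, hk⟩ := h
      exact ⟨k, fun m hm => by
        by_contra hm0
        exact hm (huniq x m k hm0 hk)⟩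
    · push_neg at h
      exact ⟨0, fun m _ => h m⟩
  choose ι hι using hsub
  have hsummable : ∀ x, Summable (fun k => f k x) := fun x =>
    summable_of_ne_finset_zero (s := {ι x}) (fun m hm => hι x m (by simpa using hm))
  have htsum : ∀ x, (∑' k, f k x) = f (ι x) x := fun x =>
    tsum_eq_single (ι x) (fun m hm => hι x m hm)
  -- bounds on sSup of ranges
  have hCsup : ∀ k, supNorm (f k) ≤ C := fun k =>
    le_trans (le_add_of_nonneg_right (lipConst_nonneg' (f k))) (hC k)
  have hClip : ∀ k, lipConst (f k) ≤ C := fun k =>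
    le_trans (le_add_of_nonneg_left (supNorm_nonneg' (f k))) (hC k)
  set M := sSup (Set.range fun k => supNorm (f k)) with hMdef
  set L := sSup (Set.range fun k => lipConst (f k)) with hLdef
  have hM : ∀ k, supNorm (f k) ≤ M := fun k =>
    le_csSup ⟨C, by rintro r ⟨k, rfl⟩; exact hCsup k⟩ ⟨k, rfl⟩
  have hL : ∀ k, lipConst (f k) ≤ L := fun k =>
    le_csSup ⟨C, by rintro r ⟨k, rfl⟩; exact hClip k⟩ ⟨k, rfl⟩
  have hM0 : 0 ≤ M := le_trans (supNorm_nonneg' (f 0)) (hM 0)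
  have hL0 : 0 ≤ L := le_trans (lipConst_nonneg' (f 0)) (hL 0)
  -- pointwise bound
  have key1 : ∀ x, |(∑' k, f k x)| ≤ M := by
    intro x
    rw [htsum x]
    obtain ⟨Ck, hCk⟩ := (hBL (ι x)).1
    exact le_trans (abs_le_supNorm' (f (ι x)) Ck hCk x) (hM (ι x))
  -- Lipschitz bound
  have key2 : ∀ x y : S, |(∑' k, f k x) - (∑' k, f k y)| ≤ 2 * L * dist x y := by
    intro x y
    have hd : (0:ℝ) ≤ dist x y := dist_nonneg
    obtain ⟨Kx, hKx⟩ := (hBL (ι x)).2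
    obtain ⟨Ky, hKy⟩ := (hBL (ι y)).2
    have hx2 : |f (ι x) x - f (ι x) y| ≤ L * dist x y :=
      le_trans (abs_sub_le_lipConst' _ Kx hKx x y)
        (mul_le_mul_of_nonneg_right (hL (ι x)) hd)
    have hy2 : |f (ι y) x - f (ι y) y| ≤ L * dist x y :=
      le_trans (abs_sub_le_lipConst' _ Ky hKy x y)
        (mul_le_mul_of_nonneg_right (hL (ι y)) hd)
    rw [htsum x, htsum y]
    by_cases hkm : ι x = ι y
    · rw [hkm]
      nlinarith [hy2, abs_nonneg (f (ι y) x - f (ι y) y)]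
    · have h1 : f (ι y) x = 0 := hι x (ι y) (fun h => hkm h.symm)
      have h2 : f (ι x) y = 0 := hι y (ι x) hkm
      calc |f (ι x) x - f (ι y) y| ≤ |f (ι x) x - (0:ℝ)| + |(0:ℝ) - f (ι y) y| :=
            abs_sub_le _ 0 _
        _ = |f (ι x) x - f (ι x) y| + |f (ι y) x - f (ι y) y| := by rw [h1, h2]
        _ ≤ L * dist x y + L * dist x y := add_le_add hx2 hy2
        _ = 2 * L * dist x y := by ring
  refine ⟨hsummable, ⟨⟨M, key1⟩, ⟨⟨2 * L, by positivity⟩, ?_⟩⟩, ?_, ?_⟩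
  · apply LipschitzWith.of_dist_le_mul
    intro x y
    rw [Real.dist_eq]
    exact key2 x y
  · exact Real.sSup_le (by rintro r ⟨x, rfl⟩; exact key1 x) hM0
  · refine Real.sSup_le ?_ (by positivity)
    rintro r ⟨x, y, hxy, rfl⟩
    rw [div_le_iff₀ (dist_pos.2 hxy)]
    exact key2 x y
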